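/- arXiv:2509.06106 — 2 statements merged into one kernel-verified Lean document; each statement's English description precedes it below -/
import Mathlib

section
/- With the notation of the free 2-step nilpotent Lie algebra 𝔤₂(ℝ^d): two functionals ℓ, ℓ̃ ∈ 𝔤₂* lie in the same coadjoint orbit if and only if they agree on the second layer (β̃_{ij} = β_{ij} for all i,j) and α̃ − α lies in the column space of the skew-symmetric matrix B defined by B_{ij} = β_{ij}. -/
/-- Model of the free 2-step nilpotent Lie algebra `𝔤₂(ℝ^d)`. -/
abbrev G2Model (d : ℕ) := (Fin d → ℝ) × Matrix (Fin d) (Fin d) ℝ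

/-- The Lie bracket of `𝔤₂(ℝ^d)` in the model. -/
def g2Bracket (d : ℕ) (X Y : G2Model d) : G2Model d :=
  (0, fun i j => X.1 i * Y.1 j - Y.1 i * X.1 j)

/-- The functional `ℓ = Σ α_i ℓ_i + Σ β_{ij} ℓ_{ij}` on `𝔤₂(ℝ^d)` determined by
coefficients `α` and the skew-symmetric coefficient matrix `β`. -/
noncomputable def g2Functional (d : ℕ) (α : Fin d → ℝ) (β : Matrix (Fin d) (Fin d) ℝ) :
    G2Model d → ℝ :=
  fun Y => (∑ i, α i * Y.1 i) + (1 / 2) * ∑ i, ∑ j, β i j * Y.2 i j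

private lemma g2_aux_double_ite (d : ℕ) (γ : Matrix (Fin d) (Fin d) ℝ) (i j : Fin d) :
    (∑ x : Fin d, ∑ x_1 : Fin d, if i = x ∧ j = x_1 then 2⁻¹ * γ x x_1 else 0)
      = 2⁻¹ * γ i j := by
  rw [Finset.sum_eq_single i]
  · rw [Finset.sum_eq_single j] <;> aesop
  · intro b _ hb
    apply Finset.sum_eq_zero
    intro k _
    simp [Ne.symm hb]
  · simp

private lemma g2_aux_alpha (d : ℕ) (β : Matrix (Fin d) (Fin d) ℝ) (X1 : Fin d → ℝ)
    (hskew : ∀ i j, β j i = -β i j) (i : Fin d) :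
    (∑ x : Fin d, ∑ x_1 : Fin d,
        β x x_1 * ((if x = i then X1 x_1 else 0) - if x_1 = i then X1 x else 0))
      = 2 * ∑ j, β i j * X1 j := by
  have e1 : (∑ x : Fin d, ∑ x_1 : Fin d, β x x_1 * (if x = i then X1 x_1 else 0))
      = ∑ j, β i j * X1 j := by
    rw [Finset.sum_comm]
    simp [mul_ite, Finset.sum_ite_eq']
  have e2 : (∑ x : Fin d, ∑ x_1 : Fin d, β x x_1 * (if x_1 = i then X1 x else 0))
      = ∑ x, β x i * X1 x := by
    simp [mul_ite, Finset.sum_ite_eq']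
  have e3 : (∑ x, β x i * X1 x) = -∑ j, β i j * X1 j := by
    rw [← Finset.sum_neg_distrib]
    exact Finset.sum_congr rfl fun x _ => by rw [hskew]; ring
  calc (∑ x : Fin d, ∑ x_1 : Fin d,
        β x x_1 * ((if x = i then X1 x_1 else 0) - if x_1 = i then X1 x else 0))
      = (∑ x : Fin d, ∑ x_1 : Fin d, β x x_1 * (if x = i then X1 x_1 else 0))
        - ∑ x : Fin d, ∑ x_1 : Fin d, β x x_1 * (if x_1 = i then X1 x else 0) := by
        simp [mul_sub, Finset.sum_sub_distrib]
    _ = 2 * ∑ j, β i j * X1 j := by rw [e1, e2, e3]; ring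

private lemma g2_aux_key (d : ℕ) (β : Matrix (Fin d) (Fin d) ℝ) (g Y1 : Fin d → ℝ)
    (hskew : ∀ i j, β j i = -β i j) :
    ∑ i, (∑ j, β i j * g j) * Y1 i
      = -(1/2) * ∑ i, ∑ j, β i j * (g i * Y1 j - Y1 i * g j) := by
  have A : (∑ i, ∑ j, β i j * (g i * Y1 j)) = ∑ i, ∑ j, -(β i j * (Y1 i * g j)) := by
    rw [Finset.sum_comm]
    exact Finset.sum_congr rfl fun a _ => Finset.sum_congr rfl fun b _ => by
      rw [hskew a b]; ring
  have B : (∑ i, ∑ j, β i j * (g i * Y1 j - Y1 i * g j))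
      = (∑ i, ∑ j, β i j * (g i * Y1 j)) - ∑ i, ∑ j, β i j * (Y1 i * g j) := by
    simp [mul_sub, Finset.sum_sub_distrib]
  have C : (∑ i, (∑ j, β i j * g j) * Y1 i) = ∑ i, ∑ j, β i j * (Y1 i * g j) := by
    refine Finset.sum_congr rfl fun a _ => ?_
    rw [Finset.sum_mul]
    exact Finset.sum_congr rfl fun b _ => by ring
  rw [B, A, C]
  simp only [Finset.sum_neg_distrib]
  ring

/-- Two functionals `ℓ, ℓ̃ ∈ 𝔤₂(ℝ^d)*` lie in the same coadjoint orbit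
(`ℓ̃ = ℓ ∘ Ad(exp(−X))` for some `X`, where `Ad(exp(−X)) Y = Y − [X,Y]`) if and
only if they agree on the second layer (`β̃ = β`) and `α̃ − α` lies in the column
space of the skew-symmetric matrix `B` with `B_{ij} = β_{ij}`. -/
theorem same_coadjoint_orbit_iff_g2 (d : ℕ) (α α' : Fin d → ℝ)
    (β β' : Matrix (Fin d) (Fin d) ℝ)
    (hβ : β.transpose = -β) (hβ' : β'.transpose = -β') :
    (∃ X : G2Model d,
        g2Functional d α' β' = fun Y => g2Functional d α β (Y - g2Bracket d X Y)) ↔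
      (β' = β ∧ ∃ g : Fin d → ℝ, ∀ i, α' i - α i = ∑ j, β i j * g j) := by
  have hskew : ∀ i j, β j i = -β i j := fun i j => by
    have := congrFun (congrFun hβ i) j
    simpa [Matrix.transpose_apply] using this
  constructor
  · rintro ⟨X, h⟩
    constructor
    · ext i j
      have h2 := congrFun h (0, Matrix.single i j 1)
      simp [g2Functional, g2Bracket, Matrix.single, Prod.sub_def,
        Finset.mul_sum, Finset.sum_ite_eq, mul_ite] at h2
      change _ = ∑ x, ∑ i_1, 2⁻¹ * (β x i_1 * ((if i = x ∧ j = i_1 then 1 else 0) - 0)) at h2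
      simp only [sub_zero, mul_ite, mul_one, mul_zero] at h2
      rw [g2_aux_double_ite, g2_aux_double_ite] at h2
      linarith
    · refine ⟨X.1, fun i => ?_⟩
      have h1 := congrFun h (Pi.single i 1, 0)
      simp [g2Functional, g2Bracket, Prod.sub_def, Pi.single_apply, mul_ite,
        Finset.sum_ite_eq'] at h1
      change α' i = α i + 2⁻¹ * ∑ x, ∑ x_1, β x x_1 * (0 - ((if x_1 = i then X.1 x else 0) - if x = i then X.1 x_1 else 0)) at h1
      simp only [zero_sub, neg_sub] at h1
      rw [g2_aux_alpha d β X.1 hskew i] at h1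
      linarith
  · rintro ⟨rfl, g, hg⟩
    refine ⟨(g, 0), ?_⟩
    funext Y
    simp only [g2Functional, g2Bracket, Prod.sub_def, Pi.sub_apply, sub_zero,
      Matrix.sub_apply]
    change _ = _ + 1 / 2 * ∑ i, ∑ j, β' i j * (Y.2 i j - (g i * Y.1 j - Y.1 i * g j))
    have hsplit : (∑ i, ∑ j, β' i j * (Y.2 i j - (g i * Y.1 j - Y.1 i * g j)))
        = (∑ i, ∑ j, β' i j * Y.2 i j)
          - ∑ i, ∑ j, β' i j * (g i * Y.1 j - Y.1 i * g j) := by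
      simp [mul_sub, Finset.sum_sub_distrib]
    have hα : (∑ i, α' i * Y.1 i)
        = (∑ i, α i * Y.1 i) + ∑ i, (∑ j, β' i j * g j) * Y.1 i := by
      rw [← Finset.sum_add_distrib]
      refine Finset.sum_congr rfl fun a _ => ?_
      rw [show α' a = α a + ∑ j, β' a j * g j by linarith [hg a]]
      ring
    rw [hsplit, hα, g2_aux_key d β' g Y.1 hskew]
    ring
end

section
/- In the free 3-step nilpotent Lie algebra 𝔤₃(ℝ²) with basis X₁, X₂ of the first layer, X₁₂ = [X₁,X₂], and X₁₁₂ = [X₁,X₁₂], X₂₁₂ = [X₂,X₁₂] of the third layer, a functional ℓ ∈ 𝔤₃* is in general position (its coadjoint orbit has maximal dimension in every quotient 𝔤₃*/𝔤₃*(j) with respect to the strong Malcev basis X₁₁₂, X₂₁₂, X₁₂, X₁, X₂) if and only if ℓ(X₁₁₂) ≠ 0. -/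
/-- If `A = P * Q` with inner dimension `k`, then `A.rank ≤ k`. -/
lemma g3r2_rank_le_of_eq_mul {k m n : ℕ} (A : Matrix (Fin m) (Fin n) ℝ)
    (P : Matrix (Fin m) (Fin k) ℝ) (Q : Matrix (Fin k) (Fin n) ℝ) (h : A = P * Q) :
    A.rank ≤ k := by
  rw [h]
  exact (Matrix.rank_mul_le_left P Q).trans ((Matrix.rank_le_card_width P).trans_eq (by simp))

/-- If `P * A * Q` is an invertible `k × k` matrix, then `k ≤ A.rank`. -/
lemma g3r2_le_rank_of_mul {k m n : ℕ} (A : Matrix (Fin m) (Fin n) ℝ)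
    (P : Matrix (Fin k) (Fin m) ℝ) (Q : Matrix (Fin n) (Fin k) ℝ)
    (h : (P * A * Q).det ≠ 0) : k ≤ A.rank := by
  have h1 : (P * A * Q).rank = k := by
    simpa using
      Matrix.rank_of_isUnit _ ((Matrix.isUnit_iff_isUnit_det _).2 (isUnit_iff_ne_zero.2 h))
  calc k = (P * (A * Q)).rank := by rw [← Matrix.mul_assoc, h1]
    _ ≤ (A * Q).rank := Matrix.rank_mul_le_right _ _
    _ ≤ A.rank := Matrix.rank_mul_le_left _ _

/-- The differential at the identity of the coadjoint orbit map of `𝔤₃(ℝ²)` at the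
functional with coefficients `(α₁, α₂, α₁₂, α₁₁₂, α₂₁₂)`, with rows indexed by the
strong Malcev ordering `(X₁₁₂, X₂₁₂, X₁₂, X₁, X₂)` of basis coefficients and
columns by the parameters `(g₁, g₂, g₁₂)`.  The (local, hence orbit) dimension of
the coadjoint orbit of `ℓ` in the quotient `𝔤₃*/𝔤₃*(j)` is the rank of the
submatrix formed by the first `j` rows. -/
noncomputable def coadDiffG3R2 (α₁₂ α₁₁₂ α₂₁₂ : ℝ) : Matrix (Fin 5) (Fin 3) ℝ :=
  ![![0, 0, 0],
    ![0, 0, 0],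
    ![-α₁₁₂, -α₂₁₂, 0],
    ![0, α₁₂, α₁₁₂],
    ![-α₁₂, 0, α₂₁₂]]

/-- The rank of the first-three-rows submatrix is at most 1. -/
lemma g3r2_rank3_le (c a b : ℝ) (hj : (3:ℕ) ≤ 5) :
    ((coadDiffG3R2 c a b).submatrix (Fin.castLE hj) id).rank ≤ 1 := by
  have e : (coadDiffG3R2 c a b).submatrix (Fin.castLE hj) id =
      ![![0,0,0],![0,0,0],![-a,-b,0]] := by
    ext i k; fin_cases i <;> rfl
  refine g3r2_rank_le_of_eq_mul _ (Matrix.of ![![0],![0],![1]])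
    (Matrix.of ![![-a,-b,0]]) ?_
  rw [e]; ext i k
  fin_cases i <;> fin_cases k <;> simp [Matrix.mul_apply, Fin.sum_univ_succ, Matrix.vecMul, Matrix.vecHead, Matrix.vecTail, dotProduct]

/-- If `a ≠ 0`, the first-three-rows submatrix has rank at least 1. -/
lemma g3r2_one_le_rank3 (c a b : ℝ) (ha : a ≠ 0) (hj : (3:ℕ) ≤ 5) :
    1 ≤ ((coadDiffG3R2 c a b).submatrix (Fin.castLE hj) id).rank := by
  refine g3r2_le_rank_of_mul _ (Matrix.of ![![0,0,1]]) (Matrix.of ![![1],![0],![0]]) ?_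
  have e : (Matrix.of ![![0,0,1]] : Matrix (Fin 1) (Fin 3) ℝ) *
      ((coadDiffG3R2 c a b).submatrix (Fin.castLE hj) id) *
      (Matrix.of ![![1],![0],![0]] : Matrix (Fin 3) (Fin 1) ℝ) = Matrix.of ![![-a]] := by
    have e0 : (coadDiffG3R2 c a b).submatrix (Fin.castLE hj) id =
        Matrix.of ![![0,0,0],![0,0,0],![-a,-b,0]] := by
      ext i k; fin_cases i <;> rfl
    rw [e0]; ext i k
    fin_cases i <;> fin_cases k <;> simp [Matrix.mul_apply, Fin.sum_univ_succ, Matrix.vecMul, Matrix.vecHead, Matrix.vecTail, dotProduct]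
  rw [e]
  have hd : Matrix.det (Matrix.of ![![-a]] : Matrix (Fin 1) (Fin 1) ℝ) = -a := by
    simp [Matrix.det_fin_one]
  rw [hd]; simpa using ha

/-- The rank of the first-four-rows submatrix is at most 2. -/
lemma g3r2_rank4_le (c a b : ℝ) (hj : (4:ℕ) ≤ 5) :
    ((coadDiffG3R2 c a b).submatrix (Fin.castLE hj) id).rank ≤ 2 := by
  have e : (coadDiffG3R2 c a b).submatrix (Fin.castLE hj) id =
      ![![0,0,0],![0,0,0],![-a,-b,0],![0,c,a]] := by
    ext i k; fin_cases i <;> rfl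
  refine g3r2_rank_le_of_eq_mul _ (Matrix.of ![![0,0],![0,0],![1,0],![0,1]])
    (Matrix.of ![![-a,-b,0],![0,c,a]]) ?_
  rw [e]; ext i k
  fin_cases i <;> fin_cases k <;> simp [Matrix.mul_apply, Fin.sum_univ_succ, Matrix.vecMul, Matrix.vecHead, Matrix.vecTail, dotProduct]

/-- If `a ≠ 0`, the first-four-rows submatrix has rank at least 2. -/
lemma g3r2_two_le_rank4 (c a b : ℝ) (ha : a ≠ 0) (hj : (4:ℕ) ≤ 5) :
    2 ≤ ((coadDiffG3R2 c a b).submatrix (Fin.castLE hj) id).rank := by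
  refine g3r2_le_rank_of_mul _ (Matrix.of ![![0,0,1,0],![0,0,0,1]])
    (Matrix.of ![![1,0],![0,0],![0,1]]) ?_
  have e : (Matrix.of ![![0,0,1,0],![0,0,0,1]] : Matrix (Fin 2) (Fin 4) ℝ) *
      ((coadDiffG3R2 c a b).submatrix (Fin.castLE hj) id) *
      (Matrix.of ![![1,0],![0,0],![0,1]] : Matrix (Fin 3) (Fin 2) ℝ) =
      Matrix.of ![![-a,0],![0,a]] := by
    have e0 : (coadDiffG3R2 c a b).submatrix (Fin.castLE hj) id =
        Matrix.of ![![0,0,0],![0,0,0],![-a,-b,0],![0,c,a]] := by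
      ext i k; fin_cases i <;> rfl
    rw [e0]; ext i k
    fin_cases i <;> fin_cases k <;> simp [Matrix.mul_apply, Fin.sum_univ_succ, Matrix.vecMul, Matrix.vecHead, Matrix.vecTail, dotProduct]
  rw [e]
  have hd : Matrix.det (Matrix.of ![![-a,0],![0,a]] : Matrix (Fin 2) (Fin 2) ℝ) = -(a*a) := by
    simp [Matrix.det_fin_two]
  rw [hd]; simpa using mul_ne_zero ha ha

/-- The full matrix always has rank at most 2. -/
lemma g3r2_rank5_le (c a b : ℝ) (hj : (5:ℕ) ≤ 5) :
    ((coadDiffG3R2 c a b).submatrix (Fin.castLE hj) id).rank ≤ 2 := by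
  have e0 : (coadDiffG3R2 c a b).submatrix (Fin.castLE hj) id =
      ![![0,0,0],![0,0,0],![-a,-b,0],![0,c,a],![-c,0,b]] := by
    ext i k; fin_cases i <;> rfl
  by_cases ha : a = 0
  · subst ha
    refine g3r2_rank_le_of_eq_mul _
      (Matrix.of ![![0,0],![0,0],![-b,0],![c,0],![0,1]])
      (Matrix.of ![![0,1,0],![-c,0,b]]) ?_
    rw [e0]; ext i k
    fin_cases i <;> fin_cases k <;> simp [Matrix.mul_apply, Fin.sum_univ_succ, Matrix.vecMul, Matrix.vecHead, Matrix.vecTail, dotProduct]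
  · refine g3r2_rank_le_of_eq_mul _
      (Matrix.of ![![0,0],![0,0],![1,0],![0,1],![c/a, b/a]])
      (Matrix.of ![![-a,-b,0],![0,c,a]]) ?_
    rw [e0]; ext i k
    fin_cases i <;> fin_cases k <;>
      simp [Matrix.mul_apply, Fin.sum_univ_succ, Matrix.vecMul, Matrix.vecHead, Matrix.vecTail, dotProduct] <;> field_simp <;> ring

/-- If `a ≠ 0`, the full matrix has rank at least 2. -/
lemma g3r2_two_le_rank5 (c a b : ℝ) (ha : a ≠ 0) (hj : (5:ℕ) ≤ 5) :
    2 ≤ ((coadDiffG3R2 c a b).submatrix (Fin.castLE hj) id).rank := by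
  refine g3r2_le_rank_of_mul _ (Matrix.of ![![0,0,1,0,0],![0,0,0,1,0]])
    (Matrix.of ![![1,0],![0,0],![0,1]]) ?_
  have e : (Matrix.of ![![0,0,1,0,0],![0,0,0,1,0]] : Matrix (Fin 2) (Fin 5) ℝ) *
      ((coadDiffG3R2 c a b).submatrix (Fin.castLE hj) id) *
      (Matrix.of ![![1,0],![0,0],![0,1]] : Matrix (Fin 3) (Fin 2) ℝ) =
      Matrix.of ![![-a,0],![0,a]] := by
    have e0 : (coadDiffG3R2 c a b).submatrix (Fin.castLE hj) id =
        Matrix.of ![![0,0,0],![0,0,0],![-a,-b,0],![0,c,a],![-c,0,b]] := by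
      ext i k; fin_cases i <;> rfl
    rw [e0]; ext i k
    fin_cases i <;> fin_cases k <;> simp [Matrix.mul_apply, Fin.sum_univ_succ, Matrix.vecMul, Matrix.vecHead, Matrix.vecTail, dotProduct]
  rw [e]
  have hd : Matrix.det (Matrix.of ![![-a,0],![0,a]] : Matrix (Fin 2) (Fin 2) ℝ) = -(a*a) := by
    simp [Matrix.det_fin_two]
  rw [hd]; simpa using mul_ne_zero ha ha

/-- In `𝔤₃(ℝ²)`, the functional `ℓ = α₁ℓ₁ + α₂ℓ₂ + α₁₂ℓ₁₂ + α₁₁₂ℓ₁₁₂ + α₂₁₂ℓ₂₁₂`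
is in general position—its coadjoint orbit has maximal dimension in every quotient
`𝔤₃*/𝔤₃*(j)` with respect to the strong Malcev basis `(X₁₁₂, X₂₁₂, X₁₂, X₁, X₂)`,
the dimension being the rank of the first `j` rows of the orbit differential—if and
only if `ℓ(X₁₁₂) = α₁₁₂ ≠ 0`. -/
theorem g3r2_general_position_iff (α₁ α₂ α₁₂ α₁₁₂ α₂₁₂ : ℝ) :
    (∀ (j : ℕ) (hj : j ≤ 5) (b₁ b₂ b₁₂ b₁₁₂ b₂₁₂ : ℝ),
        ((coadDiffG3R2 b₁₂ b₁₁₂ b₂₁₂).submatrix (Fin.castLE hj) id).rank ≤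
          ((coadDiffG3R2 α₁₂ α₁₁₂ α₂₁₂).submatrix (Fin.castLE hj) id).rank) ↔
      α₁₁₂ ≠ 0 := by
  constructor
  · intro H
    intro h0
    subst h0
    have hj : (4:ℕ) ≤ 5 := by norm_num
    have H4 := H 4 hj 0 0 0 1 0
    have hL : 2 ≤ ((coadDiffG3R2 0 1 0).submatrix (Fin.castLE hj) id).rank :=
      g3r2_two_le_rank4 0 1 0 one_ne_zero hj
    have hR : ((coadDiffG3R2 α₁₂ 0 α₂₁₂).submatrix (Fin.castLE hj) id).rank ≤ 1 := by
      have e : (coadDiffG3R2 α₁₂ 0 α₂₁₂).submatrix (Fin.castLE hj) id =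
          ![![0,0,0],![0,0,0],![-0,-α₂₁₂,0],![0,α₁₂,0]] := by
        ext i k; fin_cases i <;> rfl
      refine g3r2_rank_le_of_eq_mul _ (Matrix.of ![![0],![0],![-α₂₁₂],![α₁₂]])
        (Matrix.of ![![0,1,0]]) ?_
      rw [e]; ext i k
      fin_cases i <;> fin_cases k <;> simp [Matrix.mul_apply, Fin.sum_univ_succ, Matrix.vecMul, Matrix.vecHead, Matrix.vecTail, dotProduct]
    omega
  · intro ha j hj b₁ b₂ b₁₂ b₁₁₂ b₂₁₂
    interval_cases j
    · have h0 : ((coadDiffG3R2 b₁₂ b₁₁₂ b₂₁₂).submatrix (Fin.castLE hj) id).rank ≤ 0 := by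
        simpa using Matrix.rank_le_card_height
          ((coadDiffG3R2 b₁₂ b₁₁₂ b₂₁₂).submatrix (Fin.castLE hj) id)
      exact le_trans h0 (Nat.zero_le _)
    · have e : (coadDiffG3R2 b₁₂ b₁₁₂ b₂₁₂).submatrix (Fin.castLE hj) id = 0 := by
        ext i k; fin_cases i <;> fin_cases k <;> rfl
      rw [e, Matrix.rank_zero]
      exact Nat.zero_le _
    · have e : (coadDiffG3R2 b₁₂ b₁₁₂ b₂₁₂).submatrix (Fin.castLE hj) id = 0 := by
        ext i k; fin_cases i <;> fin_cases k <;> rfl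
      rw [e, Matrix.rank_zero]
      exact Nat.zero_le _
    · exact le_trans (g3r2_rank3_le _ _ _ hj) (g3r2_one_le_rank3 _ _ _ ha hj)
    · exact le_trans (g3r2_rank4_le _ _ _ hj) (g3r2_two_le_rank4 _ _ _ ha hj)
    · exact le_trans (g3r2_rank5_le _ _ _ hj) (g3r2_two_le_rank5 _ _ _ ha hj)
end
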